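/- Let f: R^N → R^k be a linear map such that (1−ε)‖z−z′‖² ≤ ‖f(z)−f(z′)‖² ≤ (1+ε)‖z−z′‖² holds for all z, z′ ∈ {x, y, 0}, where x, y are unit vectors in R^N and 0 < ε ≤ 1. Then (1+ε)(x·y) − 2ε ≤ f(x)·f(y) ≤ (1−ε)(x·y) + 2ε. -/
import Mathlib


open scoped RealInnerProductSpace

/-- Johnson–Lindenstrauss style inner-product preservation: if a linear map `f` approximately
preserves the pairwise squared distances among unit vectors `x`, `y` and `0`, then it
approximately preserves their inner product. -/
theorem approx_isometry_inner_product
    {N k : ℕ} (x y : EuclideanSpace ℝ (Fin N))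
    (hx : ‖x‖ = 1) (hy : ‖y‖ = 1)
    (ε : ℝ) (hε0 : 0 < ε) (hε1 : ε ≤ 1)
    (f : EuclideanSpace ℝ (Fin N) →ₗ[ℝ] EuclideanSpace ℝ (Fin k))
    (hiso : ∀ z ∈ ({x, y, 0} : Set (EuclideanSpace ℝ (Fin N))),
      ∀ z' ∈ ({x, y, 0} : Set (EuclideanSpace ℝ (Fin N))),
        (1 - ε) * ‖z - z'‖ ^ 2 ≤ ‖f z - f z'‖ ^ 2 ∧
        ‖f z - f z'‖ ^ 2 ≤ (1 + ε) * ‖z - z'‖ ^ 2) :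
    (1 + ε) * ⟪x, y⟫ - 2 * ε ≤ ⟪f x, f y⟫ ∧
    ⟪f x, f y⟫ ≤ (1 - ε) * ⟪x, y⟫ + 2 * ε := by

  have hxm : x ∈ ({x, y, 0} : Set (EuclideanSpace ℝ (Fin N))) := Or.inl rfl
  have hym : y ∈ ({x, y, 0} : Set (EuclideanSpace ℝ (Fin N))) := Or.inr (Or.inl rfl)
  have h0m : (0:EuclideanSpace ℝ (Fin N)) ∈ ({x, y, 0} : Set (EuclideanSpace ℝ (Fin N))) :=
    Or.inr (Or.inr rfl)
  have h1 := hiso x hxm 0 h0m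
  have h2 := hiso y hym 0 h0m
  have h3 := hiso x hxm y hym
  simp only [map_zero, sub_zero, hx, hy, one_pow] at h1 h2
  have e1 : ‖x - y‖ ^ 2 = ‖x‖ ^ 2 - 2 * ⟪x, y⟫ + ‖y‖ ^ 2 := norm_sub_sq_real x y
  have e2 : ‖f x - f y‖ ^ 2 = ‖f x‖ ^ 2 - 2 * ⟪f x, f y⟫ + ‖f y‖ ^ 2 :=
    norm_sub_sq_real (f x) (f y)
  rw [hx, hy] at e1
  constructor <;> nlinarith [h1.1, h1.2, h2.1, h2.2, h3.1, h3.2]
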